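/- arXiv:1911.11883 — 8 statements merged into one kernel-verified Lean document; each statement's English description precedes it below -/
import Mathlib

section
/- Let z ∈ ℂ⁸ satisfy the six manifold equations (A)-(F). Then at most two of the coordinates z₁,...,z₈ can vanish, and if two vanish they must be consecutive (indices taken modulo 8, i.e., from the cyclic set {1,...,8}). -/
lemma key_consec (a : Fin 8 → ℝ) (h0 : ∀ i, 0 ≤ a i)
    (hA : a 0 + a 4 = 6) (hB : a 1 + a 4 + a 6 = 10) (hC : a 2 + a 6 = 6)
    (hD : a 3 - a 4 + a 6 = 4) (hE : a 4 - a 5 + a 6 = 2) (hF : a 4 - a 6 + a 7 = 4) :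
    ∀ j k : Fin 8, a j = 0 → a k = 0 → j ≠ k → (j + 1 = k ∨ k + 1 = j) := by
  intro j k hj hk hne
  fin_cases j <;> fin_cases k <;> simp_all <;>
    first
      | decide
      | linarith [h0 0, h0 1, h0 2, h0 3, h0 4, h0 5, h0 6, h0 7]

lemma no_three (j k l : Fin 8) (hjk : j ≠ k) (hjl : j ≠ l) (hkl : k ≠ l)
    (h1 : j + 1 = k ∨ k + 1 = j) (h2 : j + 1 = l ∨ l + 1 = j)
    (h3 : k + 1 = l ∨ l + 1 = k) : False := by
  revert hjk hjl hkl h1 h2 h3; revert j k l; decide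

/-- If z ∈ ℂ⁸ satisfies the six manifold equations, then at most two coordinates vanish,
and if two distinct coordinates vanish they are consecutive modulo 8. -/
theorem at_most_two_consecutive_zeros (z : Fin 8 → ℂ)
    (hA : ‖z 0‖ ^ 2 + ‖z 4‖ ^ 2 = 6)
    (hB : ‖z 1‖ ^ 2 + ‖z 4‖ ^ 2 + ‖z 6‖ ^ 2 = 10)
    (hC : ‖z 2‖ ^ 2 + ‖z 6‖ ^ 2 = 6)
    (hD : ‖z 3‖ ^ 2 - ‖z 4‖ ^ 2 + ‖z 6‖ ^ 2 = 4)
    (hE : ‖z 4‖ ^ 2 - ‖z 5‖ ^ 2 + ‖z 6‖ ^ 2 = 2)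
    (hF : ‖z 4‖ ^ 2 - ‖z 6‖ ^ 2 + ‖z 7‖ ^ 2 = 4) :
    Set.ncard {i : Fin 8 | z i = 0} ≤ 2 ∧
    ∀ j k : Fin 8, z j = 0 → z k = 0 → j ≠ k → (j + 1 = k ∨ k + 1 = j) := by
  have h0 : ∀ i, 0 ≤ ‖z i‖ ^ 2 := fun i => sq_nonneg _
  have key := key_consec (fun i => ‖z i‖ ^ 2) h0 hA hB hC hD hE hF
  have key' : ∀ j k : Fin 8, z j = 0 → z k = 0 → j ≠ k → (j + 1 = k ∨ k + 1 = j) := by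
    intro j k hj hk hne
    exact key j k (by simp [hj]) (by simp [hk]) hne
  refine ⟨?_, key'⟩
  by_contra h
  push_neg at h
  obtain ⟨j, hjmem, k, hkmem, l, hlmem, hjk, hjl, hkl⟩ :=
    (Set.two_lt_ncard (Set.toFinite _)).mp h
  exact no_three j k l hjk hjl hkl (key' j k hjmem hkmem hjk)
    (key' j l hjmem hlmem hjl) (key' k l hkmem hlmem hkl)
end

section
/- Let z ∈ ℂ⁸ satisfy the six manifold equations (A)-(F) and set J = |z₁|²/2 and H = |z₃|²/2. Then 0 ≤ J ≤ 3, 0 ≤ H ≤ 3, H ≥ 1 - J, H ≤ 2 + J, H ≥ J - 2, and H ≤ 5 - J; that is, (J,H) lies in the octagon Δ obtained from [0,3]² by chopping off its corners. -/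
/-- If z ∈ ℂ⁸ satisfies the six manifold equations, then (J,H) = (|z₁|²/2, |z₃|²/2)
lies in the octagon Δ obtained from the square [0,3]² by chopping off the corners. -/
theorem JH_in_octagon (z : Fin 8 → ℂ)
    (hA : ‖z 0‖ ^ 2 + ‖z 4‖ ^ 2 = 6)
    (hB : ‖z 1‖ ^ 2 + ‖z 4‖ ^ 2 + ‖z 6‖ ^ 2 = 10)
    (hC : ‖z 2‖ ^ 2 + ‖z 6‖ ^ 2 = 6)
    (hD : ‖z 3‖ ^ 2 - ‖z 4‖ ^ 2 + ‖z 6‖ ^ 2 = 4)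
    (hE : ‖z 4‖ ^ 2 - ‖z 5‖ ^ 2 + ‖z 6‖ ^ 2 = 2)
    (hF : ‖z 4‖ ^ 2 - ‖z 6‖ ^ 2 + ‖z 7‖ ^ 2 = 4)
    (J H : ℝ)
    (hJ : J = ‖z 0‖ ^ 2 / 2)
    (hH : H = ‖z 2‖ ^ 2 / 2) :
    0 ≤ J ∧ J ≤ 3 ∧ 0 ≤ H ∧ H ≤ 3 ∧
    1 - J ≤ H ∧ H ≤ 2 + J ∧ J - 2 ≤ H ∧ H ≤ 5 - J := by
  have h0 : (0:ℝ) ≤ ‖z 0‖ ^ 2 := sq_nonneg _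
  have h1 : (0:ℝ) ≤ ‖z 1‖ ^ 2 := sq_nonneg _
  have h2 : (0:ℝ) ≤ ‖z 2‖ ^ 2 := sq_nonneg _
  have h3 : (0:ℝ) ≤ ‖z 3‖ ^ 2 := sq_nonneg _
  have h4 : (0:ℝ) ≤ ‖z 4‖ ^ 2 := sq_nonneg _
  have h5 : (0:ℝ) ≤ ‖z 5‖ ^ 2 := sq_nonneg _
  have h6 : (0:ℝ) ≤ ‖z 6‖ ^ 2 := sq_nonneg _
  have h7 : (0:ℝ) ≤ ‖z 7‖ ^ 2 := sq_nonneg _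
  refine ⟨by linarith, by linarith, by linarith, by linarith, by linarith, by linarith, by linarith, by linarith⟩
end

section
/- Conversely, for every (j,h) in the octagon Δ = {(j,h) : 0 ≤ j ≤ 3, 0 ≤ h ≤ 3, h ≥ 1-j, h ≤ 2+j, h ≥ j-2, h ≤ 5-j}, there exists z ∈ ℂ⁸ (which can be chosen with all coordinates real and nonnegative) satisfying the manifold equations (A)-(F) with |z₁|² = 2j and |z₃|² = 2h. -/
lemma abs_sqrt_sq (x : ℝ) (hx : 0 ≤ x) :
    ‖((Real.sqrt x : ℝ) : ℂ)‖ ^ 2 = x := by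
  rw [Complex.norm_real, Real.norm_eq_abs, abs_of_nonneg (Real.sqrt_nonneg x), Real.sq_sqrt hx]

/-- For every (j,h) in the octagon Δ there exists z ∈ ℂ⁸, with all coordinates real and
nonnegative, satisfying the six manifold equations and |z₁|² = 2j, |z₃|² = 2h. -/
theorem octagon_point_has_preimage (j h : ℝ)
    (h1 : 0 ≤ j) (h2 : j ≤ 3) (h3 : 0 ≤ h) (h4 : h ≤ 3)
    (h5 : 1 - j ≤ h) (h6 : h ≤ 2 + j) (h7 : j - 2 ≤ h) (h8 : h ≤ 5 - j) :
    ∃ z : Fin 8 → ℂ,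
      (∀ i, ∃ r : ℝ, 0 ≤ r ∧ z i = (r : ℂ)) ∧
      ‖z 0‖ ^ 2 + ‖z 4‖ ^ 2 = 6 ∧
      ‖z 1‖ ^ 2 + ‖z 4‖ ^ 2 + ‖z 6‖ ^ 2 = 10 ∧
      ‖z 2‖ ^ 2 + ‖z 6‖ ^ 2 = 6 ∧
      ‖z 3‖ ^ 2 - ‖z 4‖ ^ 2 + ‖z 6‖ ^ 2 = 4 ∧
      ‖z 4‖ ^ 2 - ‖z 5‖ ^ 2 + ‖z 6‖ ^ 2 = 2 ∧
      ‖z 4‖ ^ 2 - ‖z 6‖ ^ 2 + ‖z 7‖ ^ 2 = 4 ∧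
      ‖z 0‖ ^ 2 = 2 * j ∧
      ‖z 2‖ ^ 2 = 2 * h := by
  set v : Fin 8 → ℝ := ![2*j, 2*j+2*h-2, 2*h, 4-2*j+2*h, 6-2*j, 10-2*j-2*h, 6-2*h, 4+2*j-2*h]
    with hv
  have e0 : v 0 = 2*j := rfl
  have e1 : v 1 = 2*j+2*h-2 := rfl
  have e2 : v 2 = 2*h := rfl
  have e3 : v 3 = 4-2*j+2*h := rfl
  have e4 : v 4 = 6-2*j := rfl
  have e5 : v 5 = 10-2*j-2*h := rfl
  have e6 : v 6 = 6-2*h := rfl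
  have e7 : v 7 = 4+2*j-2*h := rfl
  have n0 : 0 ≤ v 0 := by rw [e0]; linarith
  have n1 : 0 ≤ v 1 := by rw [e1]; linarith
  have n2 : 0 ≤ v 2 := by rw [e2]; linarith
  have n3 : 0 ≤ v 3 := by rw [e3]; linarith
  have n4 : 0 ≤ v 4 := by rw [e4]; linarith
  have n5 : 0 ≤ v 5 := by rw [e5]; linarith
  have n6 : 0 ≤ v 6 := by rw [e6]; linarith
  have n7 : 0 ≤ v 7 := by rw [e7]; linarith
  have hnn : ∀ i, 0 ≤ v i := by
    intro i
    fin_cases i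
    exacts [n0, n1, n2, n3, n4, n5, n6, n7]
  refine ⟨fun i => ((Real.sqrt (v i) : ℝ) : ℂ),
    fun i => ⟨Real.sqrt (v i), Real.sqrt_nonneg _, rfl⟩, ?_, ?_, ?_, ?_, ?_, ?_, ?_, ?_⟩ <;>
    (repeat rw [abs_sqrt_sq _ (hnn _)]) <;>
    simp only [e0, e1, e2, e3, e4, e5, e6, e7] <;> ring
end

section
/- Let z ∈ ℂ⁸ satisfy the manifold equations (A)-(F), let J = |z₁|²/2, H = |z₃|²/2, and Z = conj(z₂)·conj(z₃)·conj(z₄)·z₆·z₇·z₈ with X = Re(Z) and Y = Im(Z). Then X² + Y² = 2⁶ · H·(H+J-1)·(H-J+2)·(-H-J+5)·(3-H)·(2-H+J). -/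
/-- For z ∈ ℂ⁸ satisfying the six manifold equations, with J = |z₁|²/2, H = |z₃|²/2 and
Z = conj(z₂)conj(z₃)conj(z₄)z₆z₇z₈, X = Re Z, Y = Im Z, we have
X² + Y² = 2⁶ · H(H+J-1)(H-J+2)(-H-J+5)(3-H)(2-H+J). -/
theorem X_sq_add_Y_sq (z : Fin 8 → ℂ)
    (hA : ‖z 0‖ ^ 2 + ‖z 4‖ ^ 2 = 6)
    (hB : ‖z 1‖ ^ 2 + ‖z 4‖ ^ 2 + ‖z 6‖ ^ 2 = 10)
    (hC : ‖z 2‖ ^ 2 + ‖z 6‖ ^ 2 = 6)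
    (hD : ‖z 3‖ ^ 2 - ‖z 4‖ ^ 2 + ‖z 6‖ ^ 2 = 4)
    (hE : ‖z 4‖ ^ 2 - ‖z 5‖ ^ 2 + ‖z 6‖ ^ 2 = 2)
    (hF : ‖z 4‖ ^ 2 - ‖z 6‖ ^ 2 + ‖z 7‖ ^ 2 = 4)
    (J H X Y : ℝ)
    (hJ : J = ‖z 0‖ ^ 2 / 2)
    (hH : H = ‖z 2‖ ^ 2 / 2)
    (hX : X = ((starRingEnd ℂ) (z 1) * (starRingEnd ℂ) (z 2) * (starRingEnd ℂ) (z 3) *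
      z 5 * z 6 * z 7).re)
    (hY : Y = ((starRingEnd ℂ) (z 1) * (starRingEnd ℂ) (z 2) * (starRingEnd ℂ) (z 3) *
      z 5 * z 6 * z 7).im) :
    X ^ 2 + Y ^ 2 =
      2 ^ 6 * H * (H + J - 1) * (H - J + 2) * (-H - J + 5) * (3 - H) * (2 - H + J) := by
  have key : X ^ 2 + Y ^ 2 =
      ‖z 1‖ ^ 2 * ‖z 2‖ ^ 2 * ‖z 3‖ ^ 2 *
        ‖z 5‖ ^ 2 * ‖z 6‖ ^ 2 * ‖z 7‖ ^ 2 := by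
    have h1 : X ^ 2 + Y ^ 2 = Complex.normSq ((starRingEnd ℂ) (z 1) * (starRingEnd ℂ) (z 2) *
        (starRingEnd ℂ) (z 3) * z 5 * z 6 * z 7) := by
      rw [hX, hY, Complex.normSq_apply]; ring
    rw [h1]
    simp only [map_mul, Complex.normSq_conj, ← Complex.sq_norm, Complex.norm_conj]
  have v1 : ‖z 1‖ ^ 2 = 2 * H + 2 * J - 2 := by linarith
  have v2 : ‖z 2‖ ^ 2 = 2 * H := by linarith
  have v3 : ‖z 3‖ ^ 2 = 2 * H - 2 * J + 4 := by linarith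
  have v5 : ‖z 5‖ ^ 2 = 10 - 2 * J - 2 * H := by linarith
  have v6 : ‖z 6‖ ^ 2 = 6 - 2 * H := by linarith
  have v7 : ‖z 7‖ ^ 2 = 4 + 2 * J - 2 * H := by linarith
  rw [key, v1, v2, v3, v5, v6, v7]
  ring
end

section
/- The function Z: ℂ⁸ → ℂ, Z(z) = conj(z₂)·conj(z₃)·conj(z₄)·z₆·z₇·z₈, is invariant under the 6-torus action (t₁,...,t₆)·z = (e^{it₁}z₁, e^{it₂}z₂, e^{it₃}z₃, e^{it₄}z₄, e^{i(t₁+t₂-t₄-t₅+t₆)}z₅, e^{it₅}z₆, e^{i(t₂+t₃+t₄-t₅-t₆)}z₇, e^{it₆}z₈), and also invariant under the circle action s·z = (e^{-is}z₁, z₂,...,z₈). -/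
open Complex

/-- The function Z(z) = conj(z₂)conj(z₃)conj(z₄)z₆z₇z₈ on ℂ⁸. -/
def Zmap (z : Fin 8 → ℂ) : ℂ :=
  (starRingEnd ℂ) (z 1) * (starRingEnd ℂ) (z 2) * (starRingEnd ℂ) (z 3) * z 5 * z 6 * z 7

lemma Zmap_cons (a b c d e f g h : ℂ) :
    Zmap ![a,b,c,d,e,f,g,h] =
      (starRingEnd ℂ) b * (starRingEnd ℂ) c * (starRingEnd ℂ) d * f * g * h := rfl

/-- Z is invariant under the given 6-torus action on ℂ⁸ and under the circle action
s·z = (e^{-is}z₁, z₂, …, z₈). -/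
theorem Zmap_invariant (t₁ t₂ t₃ t₄ t₅ t₆ s : ℝ) (z : Fin 8 → ℂ) :
    Zmap ![Complex.exp (t₁ * I) * z 0, Complex.exp (t₂ * I) * z 1,
          Complex.exp (t₃ * I) * z 2, Complex.exp (t₄ * I) * z 3,
          Complex.exp ((t₁ + t₂ - t₄ - t₅ + t₆) * I) * z 4,
          Complex.exp (t₅ * I) * z 5,
          Complex.exp ((t₂ + t₃ + t₄ - t₅ - t₆) * I) * z 6,
          Complex.exp (t₆ * I) * z 7] = Zmap z ∧
    Zmap ![Complex.exp (-s * I) * z 0, z 1, z 2, z 3, z 4, z 5, z 6, z 7] = Zmap z := by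
  constructor
  · rw [Zmap_cons, Zmap]
    simp only [map_mul, ← Complex.exp_conj, Complex.conj_ofReal, Complex.conj_I, mul_neg]
    rw [show ∀ a b c d e f a' b' c' d' e' f' : ℂ,
        (a*a')*(b*b')*(c*c')*(d*d')*(e*e')*(f*f') = (a*b*c*d*e*f)*(a'*b'*c'*d'*e'*f') from
        by intros; ring, ← Complex.exp_add, ← Complex.exp_add, ← Complex.exp_add,
        ← Complex.exp_add, ← Complex.exp_add]
    rw [show -(↑t₂*I) + -(↑t₃*I) + -(↑t₄*I) + ↑t₅*I + ((t₂:ℂ)+t₃+t₄-t₅-t₆)*I + ↑t₆*I = 0 by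
      ring]
    simp
  · rw [Zmap_cons, Zmap]
end

section
/- Let z ∈ ℂ⁸ satisfy the manifold equations (A)-(F) with |z₁|² = 2 (so J(z) = 1), and suppose Re(conj(z₂)·conj(z₃)·conj(z₄)·z₆·z₇·z₈) = 0 and z₂,z₃,z₄,z₆ ≠ 0 and all of z₂,z₃,z₄,z₆ as well as z₁,z₅ are real and positive. Then |z₇| = |z₈|, |z₈|² ≤ 6, and z₇ = i·conj(z₈) or z₇ = -i·conj(z₈). -/
/-- Let z ∈ ℂ⁸ satisfy the six manifold equations with |z₁|² = 2 (so J(z) = 1), suppose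
Re(conj(z₂)conj(z₃)conj(z₄)z₆z₇z₈) = 0, and suppose z₁,…,z₆ are real and strictly positive
(in particular nonzero). Then |z₇| = |z₈|, |z₈|² ≤ 6, and z₇ = ± i·conj(z₈). -/
theorem fibre_structure (z : Fin 8 → ℂ)
    (hA : ‖z 0‖ ^ 2 + ‖z 4‖ ^ 2 = 6)
    (hB : ‖z 1‖ ^ 2 + ‖z 4‖ ^ 2 + ‖z 6‖ ^ 2 = 10)
    (hC : ‖z 2‖ ^ 2 + ‖z 6‖ ^ 2 = 6)
    (hD : ‖z 3‖ ^ 2 - ‖z 4‖ ^ 2 + ‖z 6‖ ^ 2 = 4)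
    (hE : ‖z 4‖ ^ 2 - ‖z 5‖ ^ 2 + ‖z 6‖ ^ 2 = 2)
    (hF : ‖z 4‖ ^ 2 - ‖z 6‖ ^ 2 + ‖z 7‖ ^ 2 = 4)
    (hJ : ‖z 0‖ ^ 2 = 2)
    (hX : ((starRingEnd ℂ) (z 1) * (starRingEnd ℂ) (z 2) * (starRingEnd ℂ) (z 3) *
      z 5 * z 6 * z 7).re = 0)
    (hreal : ∀ i : Fin 8, i.val ≤ 5 → (z i).im = 0 ∧ 0 < (z i).re) :
    ‖z 6‖ = ‖z 7‖ ∧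
    ‖z 7‖ ^ 2 ≤ 6 ∧
    (z 6 = Complex.I * (starRingEnd ℂ) (z 7) ∨
     z 6 = -(Complex.I * (starRingEnd ℂ) (z 7))) := by
  have h4 : ‖z 4‖ ^ 2 = 4 := by linarith
  have h67sq : ‖z 6‖ ^ 2 = ‖z 7‖ ^ 2 := by linarith
  have h67 : ‖z 6‖ = ‖z 7‖ := by
    have n6 := norm_nonneg (z 6)
    have n7 := norm_nonneg (z 7)
    nlinarith
  have h1r := hreal 1 (by decide)
  have h2r := hreal 2 (by decide)
  have h3r := hreal 3 (by decide)
  have h5r := hreal 5 (by decide)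
  -- extract real-part equation
  simp only [Complex.mul_re, Complex.mul_im, Complex.conj_re, Complex.conj_im,
    h1r.1, h2r.1, h3r.1, h5r.1, neg_zero, zero_mul, mul_zero, sub_zero, zero_sub,
    add_zero, zero_add] at hX
  set a := (z 6).re
  set b := (z 6).im
  set c := (z 7).re
  set d := (z 7).im
  have hre : a * c - b * d = 0 := by
    have p : 0 < (z 1).re * (z 2).re * (z 3).re * (z 5).re :=
      mul_pos (mul_pos (mul_pos h1r.2 h2r.2) h3r.2) h5r.2
    have : (z 1).re * (z 2).re * (z 3).re * (z 5).re * (a * c - b * d) = 0 := by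
      linear_combination hX
    rcases mul_eq_zero.mp this with h | h
    · exact absurd h (ne_of_gt p)
    · exact h
  have habs : a ^ 2 + b ^ 2 = c ^ 2 + d ^ 2 := by
    have e6 : ‖z 6‖ ^ 2 = a ^ 2 + b ^ 2 := by
      rw [Complex.sq_norm, Complex.normSq_apply]; ring
    have e7 : ‖z 7‖ ^ 2 = c ^ 2 + d ^ 2 := by
      rw [Complex.sq_norm, Complex.normSq_apply]; ring
    rw [← e6, ← e7, h67sq]
  have key : ((a - d) ^ 2 + (b - c) ^ 2) * ((a + d) ^ 2 + (b + c) ^ 2) = 0 := by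
    linear_combination (a ^ 2 + b ^ 2 - c ^ 2 - d ^ 2) * habs + (4 * (a * c - b * d)) * hre
  refine ⟨h67, by linarith [sq_nonneg (‖z 1‖)], ?_⟩
  clear hX hA hB hC hD hE hF hJ hreal h4 h67sq h67 h1r h2r h3r h5r
  rcases mul_eq_zero.mp key with h | h
  · left
    have s1 := sq_nonneg (a - d)
    have s2 := sq_nonneg (b - c)
    have had : a - d = 0 := by
      have : (a - d) ^ 2 = 0 := by linarith
      exact pow_eq_zero_iff (two_ne_zero) |>.mp this
    have hbc : b - c = 0 := by
      have : (b - c) ^ 2 = 0 := by linarith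
      exact pow_eq_zero_iff (two_ne_zero) |>.mp this
    apply Complex.ext
    · simp only [Complex.mul_re, Complex.I_re, Complex.I_im, Complex.conj_re,
        Complex.conj_im]
      show a = _
      linarith
    · simp only [Complex.mul_im, Complex.I_re, Complex.I_im, Complex.conj_re,
        Complex.conj_im]
      show b = _
      linarith
  · right
    have s1 := sq_nonneg (a + d)
    have s2 := sq_nonneg (b + c)
    have had : a + d = 0 := by
      have : (a + d) ^ 2 = 0 := by linarith
      exact pow_eq_zero_iff (two_ne_zero) |>.mp this
    have hbc : b + c = 0 := by
      have : (b + c) ^ 2 = 0 := by linarith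
      exact pow_eq_zero_iff (two_ne_zero) |>.mp this
    apply Complex.ext
    · simp only [Complex.neg_re, Complex.mul_re, Complex.I_re, Complex.I_im,
        Complex.conj_re, Complex.conj_im]
      show a = _
      linarith
    · simp only [Complex.neg_im, Complex.mul_im, Complex.I_re, Complex.I_im,
        Complex.conj_re, Complex.conj_im]
      show b = _
      linarith
end

section
/- For every r ∈ [0, √6] and θ ∈ [0, 2π) and each choice of sign ±, the point z = (√2, √(6-r²), √(6-r²), √(8-r²), 2, √(2+r²), ±r·i·e^{-iθ}, r·e^{iθ}) ∈ ℂ⁸ satisfies the six manifold equations (A)-(F), has |z₁|²/2 = 1, and satisfies Re(conj(z₂)·conj(z₃)·conj(z₄)·z₆·z₇·z₈) = 0. -/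
open Complex Real

/-- For every r ∈ [0,√6], θ ∈ [0,2π) and each sign ε = ±1, the point
z = (√2, √(6-r²), √(6-r²), √(8-r²), 2, √(2+r²), ε·r·i·e^{-iθ}, r·e^{iθ}) satisfies the six
manifold equations, has |z₁|²/2 = 1, and Re(conj(z₂)conj(z₃)conj(z₄)z₆z₇z₈) = 0. -/
theorem pinched_torus_parametrisation (r θ : ℝ) (ε : ℝ)
    (hr : 0 ≤ r) (hr' : r ≤ Real.sqrt 6) (hθ : 0 ≤ θ) (hθ' : θ < 2 * Real.pi)
    (hε : ε = 1 ∨ ε = -1) :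
    let z : Fin 8 → ℂ :=
      ![(Real.sqrt 2 : ℂ), (Real.sqrt (6 - r ^ 2) : ℂ), (Real.sqrt (6 - r ^ 2) : ℂ),
        (Real.sqrt (8 - r ^ 2) : ℂ), (2 : ℂ), (Real.sqrt (2 + r ^ 2) : ℂ),
        (ε : ℂ) * (r : ℂ) * Complex.I * Complex.exp (-(θ : ℂ) * Complex.I),
        (r : ℂ) * Complex.exp ((θ : ℂ) * Complex.I)]
    ‖z 0‖ ^ 2 + ‖z 4‖ ^ 2 = 6 ∧
    ‖z 1‖ ^ 2 + ‖z 4‖ ^ 2 + ‖z 6‖ ^ 2 = 10 ∧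
    ‖z 2‖ ^ 2 + ‖z 6‖ ^ 2 = 6 ∧
    ‖z 3‖ ^ 2 - ‖z 4‖ ^ 2 + ‖z 6‖ ^ 2 = 4 ∧
    ‖z 4‖ ^ 2 - ‖z 5‖ ^ 2 + ‖z 6‖ ^ 2 = 2 ∧
    ‖z 4‖ ^ 2 - ‖z 6‖ ^ 2 + ‖z 7‖ ^ 2 = 4 ∧
    ‖z 0‖ ^ 2 / 2 = 1 ∧
    ((starRingEnd ℂ) (z 1) * (starRingEnd ℂ) (z 2) * (starRingEnd ℂ) (z 3) *
      z 5 * z 6 * z 7).re = 0 := by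
  intro z
  have hr6 : r ^ 2 ≤ 6 := by
    have h := Real.sq_sqrt (by norm_num : (0:ℝ) ≤ 6)
    nlinarith [Real.sqrt_nonneg 6]
  have habs : ∀ x : ℝ, 0 ≤ x → ‖((Real.sqrt x : ℝ) : ℂ)‖ ^ 2 = x := by
    intro x hx
    rw [Complex.norm_real, Real.norm_eq_abs, _root_.abs_of_nonneg (Real.sqrt_nonneg x), Real.sq_sqrt hx]
  have hε' : |ε| = 1 := by rcases hε with h | h <;> simp [h]
  have h6 : ‖z 6‖ ^ 2 = r ^ 2 := by
    show ‖(ε : ℂ) * (r : ℂ) * Complex.I * Complex.exp (-(θ : ℂ) * Complex.I)‖ ^ 2 = _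
    simp [map_mul, Complex.norm_real, Complex.norm_exp, hε', _root_.abs_of_nonneg hr]
  have h7 : ‖z 7‖ ^ 2 = r ^ 2 := by
    show ‖(r : ℂ) * Complex.exp ((θ : ℂ) * Complex.I)‖ ^ 2 = _
    simp [map_mul, Complex.norm_real, Complex.norm_exp, _root_.abs_of_nonneg hr]
  have h0 : ‖z 0‖ ^ 2 = 2 := habs 2 (by norm_num)
  have h1 : ‖z 1‖ ^ 2 = 6 - r ^ 2 := habs _ (by linarith)
  have h2 : ‖z 2‖ ^ 2 = 6 - r ^ 2 := habs _ (by linarith)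
  have h3 : ‖z 3‖ ^ 2 = 8 - r ^ 2 := habs _ (by linarith)
  have h4 : ‖z 4‖ ^ 2 = 4 := by
    show ‖(2 : ℂ)‖ ^ 2 = 4
    simp; norm_num
  have h5 : ‖z 5‖ ^ 2 = 2 + r ^ 2 := habs _ (by positivity)
  refine ⟨by rw [h0, h4]; norm_num, by rw [h1, h4, h6]; ring, by rw [h2, h6]; ring,
    by rw [h3, h4, h6]; ring, by rw [h4, h5, h6]; ring, by rw [h4, h6, h7]; ring,
    by rw [h0]; norm_num, ?_⟩
  show ((starRingEnd ℂ) ((Real.sqrt (6 - r ^ 2) : ℝ) : ℂ) *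
      (starRingEnd ℂ) ((Real.sqrt (6 - r ^ 2) : ℝ) : ℂ) *
      (starRingEnd ℂ) ((Real.sqrt (8 - r ^ 2) : ℝ) : ℂ) *
      ((Real.sqrt (2 + r ^ 2) : ℝ) : ℂ) *
      ((ε : ℂ) * (r : ℂ) * Complex.I * Complex.exp (-(θ : ℂ) * Complex.I)) *
      ((r : ℂ) * Complex.exp ((θ : ℂ) * Complex.I))).re = 0
  have hexp : Complex.exp (-(θ : ℂ) * Complex.I) * Complex.exp ((θ : ℂ) * Complex.I) = 1 := by
    rw [← Complex.exp_add]; ring_nf; exact Complex.exp_zero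
  simp only [Complex.conj_ofReal]
  have : ((Real.sqrt (6 - r ^ 2) : ℝ) : ℂ) * ((Real.sqrt (6 - r ^ 2) : ℝ) : ℂ) *
      ((Real.sqrt (8 - r ^ 2) : ℝ) : ℂ) * ((Real.sqrt (2 + r ^ 2) : ℝ) : ℂ) *
      ((ε : ℂ) * (r : ℂ) * Complex.I * Complex.exp (-(θ : ℂ) * Complex.I)) *
      ((r : ℂ) * Complex.exp ((θ : ℂ) * Complex.I)) =
      ((Real.sqrt (6 - r ^ 2) * Real.sqrt (6 - r ^ 2) * Real.sqrt (8 - r ^ 2) *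
        Real.sqrt (2 + r ^ 2) * ε * r * r : ℝ) : ℂ) * Complex.I := by
    push_cast
    calc _ = ((Real.sqrt (6 - r ^ 2) : ℂ) * (Real.sqrt (6 - r ^ 2) : ℂ) *
        (Real.sqrt (8 - r ^ 2) : ℂ) * (Real.sqrt (2 + r ^ 2) : ℂ) * (ε:ℂ) * (r:ℂ) * (r:ℂ)) *
        Complex.I * (Complex.exp (-(θ : ℂ) * Complex.I) * Complex.exp ((θ : ℂ) * Complex.I)) := by
          ring
      _ = _ := by rw [hexp]; ring
  rw [this]
  simp
end

section
/- The polynomial 𝒫(u) = 24u²⁰ - 240u¹⁸ - 1044u¹⁶ + 14112u¹⁴ - 6624u¹² - 173952u¹⁰ + 193728u⁸ + 678912u⁶ - 995328u⁴ - 589824 is strictly negative for all u ∈ [-√2, √2]; its maximum on this interval is 𝒫(0) = 𝒫(±√2) = -589824 and its minimum is 𝒫(±1) = -880236. -/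
lemma U_nonpos {x : ℝ} (h0 : 0 ≤ x) (h2 : x ≤ 2) :
    24*x^6 - 144*x^5 - 1716*x^4 + 7824*x^3 + 31536*x^2 - 79104*x - 248832 ≤ 0 := by
  nlinarith [pow_nonneg h0 3, pow_nonneg h0 4, pow_nonneg h0 5, pow_nonneg h0 2,
    mul_nonneg (mul_nonneg h0 h0) (sub_nonneg.2 h2), sq_nonneg x, sq_nonneg (x-2),
    mul_nonneg (pow_nonneg h0 4) (sub_nonneg.2 h2),
    mul_nonneg (pow_nonneg h0 2) (sub_nonneg.2 h2)]

lemma W_nonneg {x : ℝ} (h0 : 0 ≤ x) (h2 : x ≤ 2) :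
    0 ≤ 24*x^8 - 192*x^7 - 1452*x^6 + 11400*x^5 + 17628*x^4 - 150096*x^3
        - 124092*x^2 + 580824*x + 290412 := by
  nlinarith [mul_nonneg h0 (sub_nonneg.2 h2), mul_nonneg (pow_nonneg h0 2) (sub_nonneg.2 h2),
    mul_nonneg (pow_nonneg h0 3) (sub_nonneg.2 h2),
    mul_nonneg (pow_nonneg h0 4) (sub_nonneg.2 h2),
    mul_nonneg (pow_nonneg h0 5) (sub_nonneg.2 h2),
    mul_nonneg (pow_nonneg h0 6) (sub_nonneg.2 h2),
    mul_nonneg (mul_nonneg h0 (sub_nonneg.2 h2)) (mul_nonneg h0 (sub_nonneg.2 h2)),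
    pow_nonneg h0 2, pow_nonneg h0 3, pow_nonneg h0 4, pow_nonneg h0 6, sq_nonneg (x-1)]

/-- The polynomial 𝒫 is strictly negative on [-√2,√2]; its maximum there is
𝒫(0) = 𝒫(±√2) = -589824 and its minimum is 𝒫(±1) = -880236. -/
theorem P_strictly_negative :
    let P : ℝ → ℝ := fun u =>
      24 * u ^ 20 - 240 * u ^ 18 - 1044 * u ^ 16 + 14112 * u ^ 14 - 6624 * u ^ 12 -
        173952 * u ^ 10 + 193728 * u ^ 8 + 678912 * u ^ 6 - 995328 * u ^ 4 - 589824
    (∀ u : ℝ, |u| ≤ Real.sqrt 2 → P u < 0 ∧ P u ≤ -589824 ∧ -880236 ≤ P u) ∧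
    P 0 = -589824 ∧ P (Real.sqrt 2) = -589824 ∧ P (-Real.sqrt 2) = -589824 ∧
    P 1 = -880236 ∧ P (-1) = -880236 := by
  intro P
  have hs : (Real.sqrt 2) ^ 2 = 2 := Real.sq_sqrt (by norm_num)
  have hPs : ∀ s : ℝ, s ^ 2 = 2 → P s = -589824 := by
    intro s hsq
    show 24 * s ^ 20 - 240 * s ^ 18 - 1044 * s ^ 16 + 14112 * s ^ 14 - 6624 * s ^ 12 -
        173952 * s ^ 10 + 193728 * s ^ 8 + 678912 * s ^ 6 - 995328 * s ^ 4 - 589824 = -589824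
    linear_combination (s^4*(s^2-2)*(24*s^12 - 144*s^10 - 1716*s^8 + 7824*s^6 + 31536*s^4
      - 79104*s^2 - 248832) + s^4*(24*s^12 - 144*s^10 - 1716*s^8 + 7824*s^6 + 31536*s^4
      - 79104*s^2 - 248832) * 0) * hsq + (s^4*(s^2-2)*(24*s^12 - 144*s^10 - 1716*s^8
      + 7824*s^6 + 31536*s^4 - 79104*s^2 - 248832)) * 0
  refine ⟨?_, by norm_num, hPs _ hs, hPs _ (by rw [neg_pow]; simpa using hs),
    by norm_num, by norm_num⟩
  intro u hu
  have hu2 : u ^ 2 ≤ 2 := by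
    calc u ^ 2 = |u| ^ 2 := (sq_abs u).symm
    _ ≤ (Real.sqrt 2) ^ 2 := pow_le_pow_left₀ (abs_nonneg u) hu 2
    _ = 2 := hs
  have h0 : (0:ℝ) ≤ u ^ 2 := sq_nonneg u
  have hU := U_nonpos h0 hu2
  have hW := W_nonneg h0 hu2
  have hle : P u ≤ -589824 := by
    show 24 * u ^ 20 - 240 * u ^ 18 - 1044 * u ^ 16 + 14112 * u ^ 14 - 6624 * u ^ 12 -
        173952 * u ^ 10 + 193728 * u ^ 8 + 678912 * u ^ 6 - 995328 * u ^ 4 - 589824 ≤ -589824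
    nlinarith [mul_nonpos_of_nonneg_of_nonpos
      (mul_nonneg (pow_nonneg h0 2) (sq_nonneg (u^2-2))) hU, sq_nonneg (u^2*(u^2-2))]
  refine ⟨lt_of_le_of_lt hle (by norm_num), hle, ?_⟩
  show -880236 ≤ 24 * u ^ 20 - 240 * u ^ 18 - 1044 * u ^ 16 + 14112 * u ^ 14 - 6624 * u ^ 12 -
      173952 * u ^ 10 + 193728 * u ^ 8 + 678912 * u ^ 6 - 995328 * u ^ 4 - 589824
  nlinarith [mul_nonneg (sq_nonneg (u^2-1)) hW]
end
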